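/- arXiv:2511.20035 — 2 statements merged into one kernel-verified Lean document; each statement's English description precedes it below -/
import Mathlib

section
/- Let (𝔤, J, ⟨·,·⟩) be a Hermitian Lie algebra such that J is bi-invariant, i.e. [Jx, y] = J[x,y] for all x, y ∈ 𝔤 (so 𝔤 is a complex Lie algebra). Then the metric is Chern flat: Rᶜ(x,y)z = 0 for all x, y, z ∈ 𤤠𝔤. (The paper's claim that complex Lie algebras, with any compatible metric, are Chern flat.) -/
namespace LieHerm

variable {g : Type*} [LieRing g] [LieAlgebra ℝ g]

/-- `ip` is an inner product: a symmetric positive-definite bilinear form. -/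
def IsInnerProduct (ip : g →ₗ[ℝ] g →ₗ[ℝ] ℝ) : Prop :=
  (∀ x y : g, ip x y = ip y x) ∧ (∀ x : g, x ≠ 0 → 0 < ip x x)

/-- `ip` is compatible with (Hermitian with respect to) `J`. -/
def IsCompatible (ip : g →ₗ[ℝ] g →ₗ[ℝ] ℝ) (J : g →ₗ[ℝ] g) : Prop :=
  ∀ x y : g, ip (J x) (J y) = ip x y

/-- `J` is an integrable complex structure on the Lie algebra `g`. -/
def IsComplexStructure (J : g →ₗ[ℝ] g) : Prop :=
  (∀ x : g, J (J x) = -x) ∧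
  (∀ x y : g, ⁅x, y⁆ - ⁅J x, J y⁆ + J ⁅J x, y⁆ + J ⁅x, J y⁆ = 0)

/-- The Kähler form `ω(x,y) = ⟨Jx, y⟩`. -/
def omega2 (ip : g →ₗ[ℝ] g →ₗ[ℝ] ℝ) (J : g →ₗ[ℝ] g) (x y : g) : ℝ :=
  ip (J x) y

/-- The Chevalley–Eilenberg differential of the Kähler form. -/
def dOmega (ip : g →ₗ[ℝ] g →ₗ[ℝ] ℝ) (J : g →ₗ[ℝ] g) (x y z : g) : ℝ :=
  -(omega2 ip J ⁅x, y⁆ z) + omega2 ip J ⁅x, z⁆ y - omega2 ip J ⁅y, z⁆ x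

/-- The Kähler condition `dω = 0`. -/
def IsKaehler (ip : g →ₗ[ℝ] g →ₗ[ℝ] ℝ) (J : g →ₗ[ℝ] g) : Prop :=
  ∀ x y z : g, dOmega ip J x y z = 0

/-- The 3-form `σ(x,y,z) = dω(Jx,Jy,Jz)`. -/
def sigma3 (ip : g →ₗ[ℝ] g →ₗ[ℝ] ℝ) (J : g →ₗ[ℝ] g) (x y z : g) : ℝ :=
  dOmega ip J (J x) (J y) (J z)

/-- Pluriclosed (SKT): `dσ = 0` where `σ(x,y,z) = dω(Jx,Jy,Jz)`. -/
def IsPluriclosed (ip : g →ₗ[ℝ] g →ₗ[ℝ] ℝ) (J : g →ₗ[ℝ] g) : Prop :=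
  ∀ x y z w : g,
    -(sigma3 ip J ⁅x, y⁆ z w) + sigma3 ip J ⁅x, z⁆ y w - sigma3 ip J ⁅x, w⁆ y z
      - sigma3 ip J ⁅y, z⁆ x w + sigma3 ip J ⁅y, w⁆ x z - sigma3 ip J ⁅z, w⁆ x y = 0

/-- Balanced: the Lee form vanishes, i.e. for every orthonormal basis `(e_i)` one has
`∑ i, dω(e_i, J e_i, x) = 0` for all `x`. -/
def IsBalanced (ip : g →ₗ[ℝ] g →ₗ[ℝ] ℝ) (J : g →ₗ[ℝ] g) : Prop :=
  ∀ (m : ℕ) (b : Module.Basis (Fin m) ℝ g),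
    (∀ i j, ip (b i) (b j) = if i = j then 1 else 0) →
    ∀ x : g, ∑ i, dOmega ip J (b i) (J (b i)) x = 0

/-- The Levi-Civita connection of a metric Lie algebra, via the Koszul formula. -/
def IsLeviCivita (ip : g →ₗ[ℝ] g →ₗ[ℝ] ℝ) (D : g →ₗ[ℝ] g →ₗ[ℝ] g) : Prop :=
  ∀ x y z : g, 2 * ip (D x y) z = ip ⁅x, y⁆ z - ip ⁅y, z⁆ x + ip ⁅z, x⁆ y

/-- The curvature of a connection `D` on a Lie algebra. -/
def curv (D : g →ₗ[ℝ] g →ₗ[ℝ] g) (x y z : g) : g :=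
  D x (D y z) - D y (D x z) - D ⁅x, y⁆ z

/-- The torsion of a connection `D` on a Lie algebra. -/
def tor (D : g →ₗ[ℝ] g →ₗ[ℝ] g) (x y : g) : g :=
  D x y - D y x - ⁅x, y⁆

/-- `D` is the Chern connection: metric, `J`-parallel, torsion has vanishing (1,1)-part. -/
def IsChern (ip : g →ₗ[ℝ] g →ₗ[ℝ] ℝ) (J : g →ₗ[ℝ] g) (D : g →ₗ[ℝ] g →ₗ[ℝ] g) : Prop :=
  (∀ x y z : g, ip (D x y) z + ip y (D x z) = 0) ∧
  (∀ x y : g, D x (J y) = J (D x y)) ∧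
  (∀ x y : g, tor D (J x) (J y) = -(tor D x y))

/-- `D` is the Bismut connection: metric, `J`-parallel, totally skew-symmetric torsion. -/
def IsBismut (ip : g →ₗ[ℝ] g →ₗ[ℝ] ℝ) (J : g →ₗ[ℝ] g) (D : g →ₗ[ℝ] g →ₗ[ℝ] g) : Prop :=
  (∀ x y z : g, ip (D x y) z + ip y (D x z) = 0) ∧
  (∀ x y : g, D x (J y) = J (D x y)) ∧
  (∀ x y z : g, ip (tor D x y) z = -(ip (tor D x z) y))

/-- Unimodularity: `tr (ad x) = 0` for all `x`. -/
def Unimodular (g : Type*) [LieRing g] [LieAlgebra ℝ g] : Prop :=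
  ∀ x : g, LinearMap.trace ℝ g (LieAlgebra.ad ℝ g x) = 0

/-- The commutator ideal `[g,g]`, as a submodule. -/
def commutatorSubmodule (g : Type*) [LieRing g] [LieAlgebra ℝ g] : Submodule ℝ g :=
  Submodule.span ℝ {z : g | ∃ x y : g, ⁅x, y⁆ = z}

/-- `J` is nilpotent in the sense of Cordero–Fernández–Gray–Ugarte. -/
def CFGUNilpotent (J : g →ₗ[ℝ] g) : Prop :=
  ∃ (k : ℕ) (a : ℕ → Submodule ℝ g),
    a 0 = ⊥ ∧
    (∀ l : ℕ, ∀ x : g, x ∈ a (l + 1) ↔ ∀ y : g, ⁅x, y⁆ ∈ a l ∧ ⁅J x, y⁆ ∈ a l) ∧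
    a k = ⊤

theorem complex_lie_algebra_is_chern_flat
    {g : Type*} [LieRing g] [LieAlgebra ℝ g] [FiniteDimensional ℝ g]
    (ip : g →ₗ[ℝ] g →ₗ[ℝ] ℝ) (J : g →ₗ[ℝ] g)
    (hip : IsInnerProduct ip) (hJ : IsComplexStructure J) (hcomp : IsCompatible ip J)
    (hbi : ∀ x y : g, ⁅J x, y⁆ = J ⁅x, y⁆)
    (Dc : g →ₗ[ℝ] g →ₗ[ℝ] g) (hDc : IsChern ip J Dc) :
    ∀ x y z : g, curv Dc x y z = 0 := by
  obtain ⟨hsym, hpos⟩ := hip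
  obtain ⟨hJ2, _⟩ := hJ
  obtain ⟨hmet, hpar, htor⟩ := hDc
  -- skew-symmetry in last two slots
  have h1 : ∀ a b c : g, ip (Dc a b) c = - ip (Dc a c) b := by
    intro a b c
    have := hmet a b c
    have hs := hsym b (Dc a c)
    linarith
  -- ip (J u) v = - ip u (J v)
  have hJskew : ∀ u v : g, ip (J u) v = - ip u (J v) := by
    intro u v
    have h := hcomp (J u) v
    rw [hJ2] at h
    simp only [map_neg, LinearMap.neg_apply] at h
    linarith
  -- relation from J-parallelism
  have h2 : ∀ a b c : g, ip (Dc a (J b)) c = - ip (Dc a b) (J c) := by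
    intro a b c
    rw [hpar a b]
    exact hJskew (Dc a b) c
  have h2' : ∀ a b c : g, ip (Dc a (J b)) (J c) = ip (Dc a b) c := by
    intro a b c
    rw [h2 a b (J c), hJ2]
    simp
  -- bi-invariance consequence: [Ja, Jb] = -[a,b]
  have hbij : ∀ a b : g, ⁅J a, J b⁆ = - ⁅a, b⁆ := by
    intro a b
    have h1' : ⁅J a, J b⁆ = J ⁅a, J b⁆ := hbi a (J b)
    have h2'' : ⁅a, J b⁆ = J ⁅a, b⁆ := by
      rw [← lie_skew, hbi b a, ← map_neg, lie_skew]
    rw [h1', h2'', hJ2]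
  -- torsion condition
  have h3 : ∀ a b c : g,
      ip (Dc (J a) (J b)) c + ip (Dc a b) c
        = ip (Dc (J b) (J a)) c + ip (Dc b a) c := by
    intro a b c
    have ht := htor a b
    unfold tor at ht
    rw [hbij a b] at ht
    have h := congrArg (fun v => ip v c) ht
    simp only [map_sub, map_add, map_neg, LinearMap.sub_apply, LinearMap.add_apply,
      LinearMap.neg_apply] at h
    linarith
  -- F(a,b,c) := B(Ja,Jb,c) + B(a,b,c); show F(a,b,Jc) = 0
  have hF0 : ∀ a b c : g,
      ip (Dc (J a) (J b)) (J c) + ip (Dc a b) (J c) = 0 := by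
    intro a b c
    -- e1 : F a b (Jc) = F b a (Jc)
    have e1 := h3 a b (J c)
    -- e3 : F (Jb) a c = F a (Jb) c
    have e3 := h3 (J b) a c
    simp only [hJ2, map_neg, LinearMap.neg_apply] at e3
    -- e2 : F (Jb) a c = F b a (Jc) ; components:
    have c1 := h2 b a c          -- ip (Dc b (J a)) c = - ip (Dc b a) (J c)
    have c2 := h2' (J b) a c     -- ip (Dc (Jb) (J a)) (J c) = ip (Dc (Jb) a) c
    -- e4 : F a (Jb) c = - F a b (Jc) ; components:
    have c3 := h2 a b c          -- ip (Dc a (J b)) c = - ip (Dc a b) (J c)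
    have c4 := h2' (J a) b c     -- ip (Dc (Ja) (J b)) (J c) = ip (Dc (Ja) b) c
    linarith
  have hF : ∀ a b c : g,
      ip (Dc (J a) (J b)) c + ip (Dc a b) c = 0 := by
    intro a b c
    have := hF0 a b (J c)
    rw [hJ2] at this
    simp only [map_neg] at this
    linarith
  -- conclude B = 0
  have key : ∀ a b c : g, ip (Dc a b) c = 0 := by
    intro a b c
    have k1 := hF a c b          -- B(Ja,Jc,b) + B(a,c,b) = 0
    have k2 := h2 (J a) c b      -- B(Ja,Jc,b) = - B(Ja,c,Jb)
    have k3 := h1 (J a) c (J b)  -- B(Ja,c,Jb) = - B(Ja,Jb,c)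
    have k4 := hF a b c          -- B(Ja,Jb,c) + B(a,b,c) = 0
    have k5 := h1 a b c          -- B(a,b,c) = - B(a,c,b)
    linarith
  have hD : ∀ a b : g, Dc a b = 0 := by
    intro a b
    by_contra h
    have := hpos (Dc a b) h
    have := key a b (Dc a b)
    linarith
  intro x y z
  simp [curv, hD]

end LieHerm
end

section
/- Let 𝔤 be a finite-dimensional real unimodular almost abelian Lie algebra (i.e. 𝔤 contains an abelian ideal of codimension 1) with an integrable complex structure J. If (𝔤, J) admits a compatible inner product that is pluriclosed and a compatible inner product that is balanced, then (𝔤, J) admits a compatible inner product that is Kähler. (Fino–Paradiso: the Fino–Vezzoni conjecture for almost abelian Lie-Hermitian manifolds.) -/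
namespace LieHerm

open Module

variable {g : Type*} [LieRing g] [LieAlgebra ℝ g]

section AuxiliaryLemmas

open Module

variable {V : Type*} [AddCommGroup V] [Module ℝ V]

private lemma exists_onb_aux [FiniteDimensional ℝ V] (ip : V →ₗ[ℝ] V →ₗ[ℝ] ℝ)
    (hsym : ∀ x y : V, ip x y = ip y x) (hpos : ∀ x : V, x ≠ 0 → 0 < ip x x)
    (W : Submodule ℝ V) :
    ∃ u : Fin (finrank ℝ W) → V, (∀ i, u i ∈ W) ∧
      (∀ i j, ip (u i) (u j) = if i = j then 1 else 0) ∧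
      (∀ x ∈ W, ∑ i, ip x (u i) • u i = x) := by
  have hnonneg : ∀ x : V, 0 ≤ ip x x := by
    intro x
    rcases eq_or_ne x 0 with h | h
    · simp [h]
    · exact (hpos x h).le
  letI core : InnerProductSpace.Core ℝ ↥W :=
    { inner := fun x y => ip x y
      conj_inner_symm := fun x y => by simpa using hsym y x
      re_inner_nonneg := fun x => by simpa using hnonneg x
      add_left := fun x y z => by simp
      smul_left := fun x y r => by simp
      definite := fun x hx => by
        by_contra h
        have hx0 : (x : V) ≠ 0 := by
          simpa [Submodule.coe_eq_zero] using h
        have := hpos x hx0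
        rw [show ip (x:V) (x:V) = 0 from hx] at this
        exact lt_irrefl 0 this }
  letI : NormedAddCommGroup ↥W := @InnerProductSpace.Core.toNormedAddCommGroup ℝ ↥W _ _ _ core
  letI : InnerProductSpace ℝ ↥W := InnerProductSpace.ofCore core.toCore
  have hinner : ∀ x y : ↥W, (inner ℝ x y : ℝ) = ip (x : V) (y : V) := fun _ _ => rfl
  let B := stdOrthonormalBasis ℝ ↥W
  refine ⟨fun i => (B i : V), fun i => (B i).2, ?_, ?_⟩
  · intro i j
    have := B.orthonormal
    rw [orthonormal_iff_ite] at this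
    rw [← hinner]
    exact this i j
  · intro x hx
    have h := B.sum_repr ⟨x, hx⟩
    have h2 : ∀ i, B.repr ⟨x, hx⟩ i = ip x (B i : V) := by
      intro i
      rw [B.repr_apply_apply, hinner]
      exact hsym _ _
    calc ∑ i, ip x (B i : V) • (B i : V)
        = ((∑ i, B.repr ⟨x, hx⟩ i • B i : ↥W) : V) := by
          rw [Submodule.coe_sum]
          exact Finset.sum_congr rfl fun i _ => by rw [h2]; rfl
      _ = x := by rw [h]

private lemma exists_onb [FiniteDimensional ℝ V] (ip : V →ₗ[ℝ] V →ₗ[ℝ] ℝ)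
    (hsym : ∀ x y : V, ip x y = ip y x) (hpos : ∀ x : V, x ≠ 0 → 0 < ip x x)
    (W : Submodule ℝ V) :
    ∃ (n : ℕ) (u : Fin n → V), n = finrank ℝ W ∧ (∀ i, u i ∈ W) ∧
      (∀ i j, ip (u i) (u j) = if i = j then 1 else 0) ∧
      (∀ x ∈ W, ∑ i, ip x (u i) • u i = x) := by
  obtain ⟨u, h1, h2, h3⟩ := exists_onb_aux ip hsym hpos W
  exact ⟨_, u, rfl, h1, h2, h3⟩

private lemma exists_unit_orth [FiniteDimensional ℝ V] (ip : V →ₗ[ℝ] V →ₗ[ℝ] ℝ)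
    (hsym : ∀ x y : V, ip x y = ip y x) (hpos : ∀ x : V, x ≠ 0 → 0 < ip x x)
    (b : Submodule ℝ V) (hcodim : finrank ℝ V = finrank ℝ b + 1) :
    ∃ e : V, ip e e = 1 ∧ ∀ x : V, x ∈ b ↔ ip e x = 0 := by
  obtain ⟨u, humem, huorth, huexp⟩ := exists_onb_aux ip hsym hpos b
  -- pick w ∉ b
  have hbne : b ≠ ⊤ := by
    intro h
    rw [h, finrank_top] at hcodim
    omega
  obtain ⟨w, hw⟩ : ∃ w : V, w ∉ b := by
    by_contra h
    push_neg at h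
    exact hbne (Submodule.eq_top_iff'.2 h)
  set z := w - ∑ i, ip w (u i) • u i with hz_def
  have hsum_mem : ∑ i, ip w (u i) • u i ∈ b :=
    Submodule.sum_mem _ fun i _ => Submodule.smul_mem _ _ (humem i)
  have hz_ne : z ≠ 0 := by
    intro h
    apply hw
    have : w = ∑ i, ip w (u i) • u i := by
      have := sub_eq_zero.1 h
      exact this
    rw [this]; exact hsum_mem
  have hz_orth : ∀ x ∈ b, ip z x = 0 := by
    intro x hx
    have hx_exp := huexp x hx
    have h1 : ip z x = ip w x - ∑ i, ip w (u i) * ip (u i) x := by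
      simp [hz_def, map_sub, map_sum, map_smul, smul_eq_mul, LinearMap.sub_apply,
        LinearMap.sum_apply, LinearMap.smul_apply]
    have h2 : ip w x = ∑ i, ip x (u i) * ip w (u i) := by
      conv_lhs => rw [← hx_exp]
      simp [map_sum, map_smul, smul_eq_mul, mul_comm]
    rw [h1, h2, sub_eq_zero]
    exact Finset.sum_congr rfl fun i _ => by rw [hsym (u i) x]; ring
  have hzz : 0 < ip z z := hpos z hz_ne
  set c := Real.sqrt (ip z z) with hc_def
  have hc : 0 < c := Real.sqrt_pos.2 hzz
  have hcc : c * c = ip z z := Real.mul_self_sqrt hzz.le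
  refine ⟨c⁻¹ • z, ?_, ?_⟩
  · simp only [map_smul, LinearMap.smul_apply, smul_eq_mul]
    rw [← hcc]
    field_simp
  · intro x
    constructor
    · intro hx
      simp [map_smul, smul_eq_mul, hz_orth x hx]
    · intro hx
      -- x = (ip z x / ip z z) • z + (x - ...) where the latter... rather:
      -- write x using span argument
      have hzx : ip z x = 0 := by
        have : c⁻¹ * ip z x = 0 := by simpa [map_smul, smul_eq_mul] using hx
        rcases mul_eq_zero.1 this with h | h
        · exact absurd h (inv_ne_zero hc.ne')
        · exact h
      -- The span of z and b is everything
      have hdisj : Submodule.span ℝ {z} ⊓ b = ⊥ := by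
        rw [Submodule.eq_bot_iff]
        rintro y ⟨hy1, hy2⟩
        obtain ⟨t, rfl⟩ := Submodule.mem_span_singleton.1 hy1
        have := hz_orth _ hy2
        simp only [map_smul, smul_eq_mul] at this
        rcases mul_eq_zero.1 this with h | h
        · simp [h]
        · exact absurd h hzz.ne'
      have hsup : Submodule.span ℝ {z} ⊔ b = ⊤ := by
        apply Submodule.eq_top_of_finrank_eq
        have := Submodule.finrank_sup_add_finrank_inf_eq (Submodule.span ℝ {z}) b
        rw [hdisj] at this
        simp only [finrank_bot, add_zero] at this
        rw [this, finrank_span_singleton hz_ne, hcodim]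
        omega
      have hx_mem : x ∈ Submodule.span ℝ {z} ⊔ b := by rw [hsup]; exact Submodule.mem_top
      obtain ⟨y, hy, p, hp, rfl⟩ := Submodule.mem_sup.1 hx_mem
      obtain ⟨t, rfl⟩ := Submodule.mem_span_singleton.1 hy
      have : ip z (t • z + p) = t * ip z z := by
        simp [map_add, map_smul, smul_eq_mul, hz_orth p hp]
      rw [hzx] at this
      have ht : t = 0 := by
        rcases mul_eq_zero.1 this.symm with h | h
        · exact h
        · exact absurd h hzz.ne'
      rw [ht]
      simpa using hp

end AuxiliaryLemmas


set_option maxHeartbeats 2000000 in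
theorem fino_paradiso_fino_vezzoni_almost_abelian
    {g : Type*} [LieRing g] [LieAlgebra ℝ g] [FiniteDimensional ℝ g]
    (hu : Unimodular g)
    (b : Submodule ℝ g) (hideal : ∀ x : g, ∀ y ∈ b, ⁅x, y⁆ ∈ b)
    (habel : ∀ x ∈ b, ∀ y ∈ b, ⁅x, y⁆ = (0 : g))
    (hcodim : Module.finrank ℝ g = Module.finrank ℝ b + 1)
    (J : g →ₗ[ℝ] g) (hJ : IsComplexStructure J)
    (hskt : ∃ ip : g →ₗ[ℝ] g →ₗ[ℝ] ℝ, IsInnerProduct ip ∧ IsCompatible ip J ∧ IsPluriclosed ip J)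
    (hbal : ∃ ip : g →ₗ[ℝ] g →ₗ[ℝ] ℝ, IsInnerProduct ip ∧ IsCompatible ip J ∧ IsBalanced ip J) :
    ∃ ip : g →ₗ[ℝ] g →ₗ[ℝ] ℝ, IsInnerProduct ip ∧ IsCompatible ip J ∧ IsKaehler ip J := by
  obtain ⟨hJ2, hNij⟩ := hJ
  obtain ⟨ip₂, ⟨hsym₂, hpos₂⟩, hcomp₂, hbal₂⟩ := hbal
  obtain ⟨ip₁, ⟨hsym₁, hpos₁⟩, hcomp₁, hskt₁⟩ := hskt
  have hdef₂ : ∀ x : g, ip₂ x x = 0 → x = 0 := by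
    intro x hx
    by_contra h
    exact absurd hx (hpos₂ x h).ne'
  have hdef₁ : ∀ x : g, ip₁ x x = 0 → x = 0 := by
    intro x hx
    by_contra h
    exact absurd hx (hpos₁ x h).ne'
  have skewJ₂ : ∀ x y : g, ip₂ (J x) y = -ip₂ x (J y) := by
    intro x y
    have h := hcomp₂ (J x) y
    rw [hJ2 x] at h
    simpa [map_neg] using h.symm
  have skewJ₁ : ∀ x y : g, ip₁ (J x) y = -ip₁ x (J y) := by
    intro x y
    have h := hcomp₁ (J x) y
    rw [hJ2 x] at h
    simpa [map_neg] using h.symm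
  obtain ⟨e₁, he₁, hbcrit⟩ := exists_unit_orth ip₂ hsym₂ hpos₂ b hcodim
  set e := J e₁ with he_def
  have hJe : J e = -e₁ := hJ2 e₁
  have he_mem : e ∈ b := by
    rw [hbcrit]
    have h1 := skewJ₂ e₁ e₁
    have h2 := hsym₂ (J e₁) e₁
    rw [← he_def] at h1 h2
    linarith
  have hee : ip₂ e e = 1 := by
    rw [he_def]
    rw [show ip₂ (J e₁) (J e₁) = ip₂ e₁ e₁ from hcomp₂ e₁ e₁]
    exact he₁
  have he₁e : ip₂ e₁ e = 0 := (hbcrit e).1 he_mem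
  -- the J-invariant codimension-2 ideal b₁
  set b₁ : Submodule ℝ g := b ⊓ LinearMap.ker (ip₂.flip e) with hb₁_def
  have hmem_b₁ : ∀ x : g, x ∈ b₁ ↔ (x ∈ b ∧ ip₂ x e = 0) := by
    intro x
    simp [hb₁_def, Submodule.mem_inf, LinearMap.mem_ker, LinearMap.flip_apply]
  have hb₁b : ∀ x ∈ b₁, x ∈ b := fun x hx => ((hmem_b₁ x).1 hx).1
  have hb₁e : ∀ x ∈ b₁, ip₂ x e = 0 := fun x hx => ((hmem_b₁ x).1 hx).2
  have hJb₁ : ∀ x ∈ b₁, J x ∈ b₁ := by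
    intro x hx
    obtain ⟨hxb, hxe⟩ := (hmem_b₁ x).1 hx
    rw [hmem_b₁]
    constructor
    · rw [hbcrit]
      rw [hsym₂, skewJ₂, ← he_def, neg_eq_zero]
      exact hxe
    · rw [he_def, hcomp₂, hsym₂]
      exact (hbcrit x).1 hxb
  have hb₁J : ∀ x : g, x ∈ b → J x ∈ b → x ∈ b₁ := by
    intro x hxb hJxb
    rw [hmem_b₁]
    refine ⟨hxb, ?_⟩
    have h := skewJ₂ x e₁
    rw [← he_def] at h
    have h2 : ip₂ x e = -ip₂ (J x) e₁ := by
      rw [he_def]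
      have := skewJ₂ x e₁
      linarith
    rw [h2, hsym₂]
    simpa using (hbcrit (J x)).1 hJxb
  have hfb₁ : ∀ y ∈ b₁, ⁅e₁, y⁆ ∈ b₁ ∧ ⁅e₁, J y⁆ = J ⁅e₁, y⁆ := by
    intro y hy
    have hN := hNij e₁ y
    have h1 : ⁅J e₁, J y⁆ = 0 := habel _ he_mem _ (hb₁b _ (hJb₁ y hy))
    have h2 : ⁅J e₁, y⁆ = 0 := habel _ he_mem _ (hb₁b y hy)
    rw [h1, h2] at hN
    simp only [map_zero, sub_zero, add_zero, zero_add] at hN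
    -- hN : ⁅e₁, y⁆ + J ⁅e₁, J y⁆ = 0
    have hJy : J ⁅e₁, J y⁆ = -⁅e₁, y⁆ := eq_neg_of_add_eq_zero_right hN
    have hcomm : ⁅e₁, J y⁆ = J ⁅e₁, y⁆ := by
      have h3 := hJ2 ⁅e₁, J y⁆
      rw [hJy, map_neg] at h3
      exact (neg_injective h3).symm
    refine ⟨hb₁J _ (hideal e₁ y (hb₁b y hy)) ?_, hcomm⟩
    rw [← hcomm]
    exact hideal e₁ (J y) (hb₁b _ (hJb₁ y hy))
  -- dimension count
  have he_ne : e ≠ 0 := by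
    intro h
    rw [h] at hee
    simp at hee
  have hspan_b : Submodule.span ℝ {e} ⊔ b₁ = b := by
    apply le_antisymm
    · apply sup_le
      · rw [Submodule.span_le, Set.singleton_subset_iff]
        exact he_mem
      · rw [hb₁_def]
        exact inf_le_left
    · intro x hx
      have h1 : ip₂ x e • e ∈ Submodule.span ℝ {e} :=
        Submodule.smul_mem _ _ (Submodule.mem_span_singleton_self e)
      have h2 : x - ip₂ x e • e ∈ b₁ := by
        rw [hmem_b₁]
        constructor
        · exact Submodule.sub_mem _ hx (Submodule.smul_mem _ _ he_mem)
        · simp [map_sub, map_smul, smul_eq_mul, hee]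
      have := Submodule.add_mem_sup h1 h2
      simpa using this
  have hdisj1 : Submodule.span ℝ {e} ⊓ b₁ = ⊥ := by
    rw [Submodule.eq_bot_iff]
    rintro y ⟨hy1, hy2⟩
    obtain ⟨t, rfl⟩ := Submodule.mem_span_singleton.1 hy1
    have := hb₁e _ hy2
    simp only [map_smul, LinearMap.smul_apply, smul_eq_mul, hee, mul_one] at this
    simp [this]
  have hrank_b : finrank ℝ b = finrank ℝ b₁ + 1 := by
    have h := Submodule.finrank_sup_add_finrank_inf_eq (Submodule.span ℝ {e}) b₁
    rw [hspan_b, hdisj1, finrank_span_singleton he_ne] at h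
    simp only [finrank_bot, add_zero] at h
    omega
  -- orthonormal basis of b₁ for ip₂
  obtain ⟨n, u, hn_rank, humem, huorth, huexp⟩ := exists_onb ip₂ hsym₂ hpos₂ b₁
  set cfam : Fin (n + 2) → g := Fin.cons e₁ (Fin.cons e u) with hcfam
  have hc0 : cfam 0 = e₁ := rfl
  have horthoc : ∀ i j, ip₂ (cfam i) (cfam j) = if i = j then 1 else 0 := by
    intro i j
    induction i using Fin.cases with
    | zero =>
      induction j using Fin.cases with
      | zero => simpa [hcfam] using he₁
      | succ j' =>
        induction j' using Fin.cases with
        | zero =>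
          rw [if_neg (Fin.succ_ne_zero _).symm]
          simpa [hcfam] using he₁e
        | succ j'' =>
          rw [if_neg (Fin.succ_ne_zero _).symm]
          simpa [hcfam] using (hbcrit _).1 (hb₁b _ (humem j''))
    | succ i' =>
      induction j using Fin.cases with
      | zero =>
        rw [if_neg (Fin.succ_ne_zero _), hsym₂]
        induction i' using Fin.cases with
        | zero => simpa [hcfam] using he₁e
        | succ i'' => simpa [hcfam] using (hbcrit _).1 (hb₁b _ (humem i''))
      | succ j' =>
        simp only [Fin.succ_inj]
        induction i' using Fin.cases with
        | zero =>
          induction j' using Fin.cases with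
          | zero => simpa [hcfam] using hee
          | succ j'' =>
            rw [if_neg (Fin.succ_ne_zero _).symm, hsym₂]
            simpa [hcfam] using hb₁e _ (humem j'')
        | succ i'' =>
          induction j' using Fin.cases with
          | zero =>
            rw [if_neg (Fin.succ_ne_zero _)]
            simpa [hcfam] using hb₁e _ (humem i'')
          | succ j'' =>
            simp only [Fin.succ_inj]
            simpa [hcfam] using huorth i'' j''
  have hlin : LinearIndependent ℝ cfam := by
    rw [Fintype.linearIndependent_iff]
    intro coef hsum j
    have h := congrArg (fun t => ip₂ t (cfam j)) hsum
    simp only [map_sum, map_smul, LinearMap.sum_apply, LinearMap.smul_apply, smul_eq_mul,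
      map_zero, LinearMap.zero_apply] at h
    rw [Finset.sum_congr rfl (fun i _ => by rw [horthoc i j])] at h
    simpa [mul_ite, Finset.sum_ite_eq'] using h
  have hcard : Fintype.card (Fin (n + 2)) = finrank ℝ g := by
    simp only [Fintype.card_fin]
    rw [hn_rank]
    omega
  set B := basisOfLinearIndependentOfCardEqFinrank hlin hcard with hB_def
  have hB : ∀ i, B i = cfam i := by
    intro i
    rw [hB_def, coe_basisOfLinearIndependentOfCardEqFinrank]
  have hθ : ∀ x : g, ∑ i, dOmega ip₂ J (B i) (J (B i)) x = 0 := by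
    intro x
    exact hbal₂ (n + 2) B (fun i j => by rw [hB i, hB j]; exact horthoc i j) x
  have hswap : ⁅e, e₁⁆ = -⁅e₁, e⁆ := by rw [← lie_skew]
  have hsplit : ∀ x : g, (∑ i, dOmega ip₂ J (B i) (J (B i)) x) =
      dOmega ip₂ J e₁ (J e₁) x + dOmega ip₂ J e (J e) x
        + ∑ j, dOmega ip₂ J (u j) (J (u j)) x := by
    intro x
    simp only [hB, hcfam]
    rw [Fin.sum_univ_succ]
    simp only [Fin.cons_zero, Fin.cons_succ]
    rw [Fin.sum_univ_succ]
    simp only [Fin.cons_zero, Fin.cons_succ]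
    ring
  have hterm_b₁ : ∀ w ∈ b₁, ∀ y ∈ b, dOmega ip₂ J w (J w) y = 0 := by
    intro w hw y hy
    have h1 : ⁅w, J w⁆ = 0 := habel _ (hb₁b _ hw) _ (hb₁b _ (hJb₁ _ hw))
    have h2 : ⁅w, y⁆ = 0 := habel _ (hb₁b _ hw) _ hy
    have h3 : ⁅J w, y⁆ = 0 := habel _ (hb₁b _ (hJb₁ _ hw)) _ hy
    simp [dOmega, omega2, h1, h2, h3]
  have hA0 : dOmega ip₂ J e₁ (J e₁) e₁ = 0 := by
    rw [← he_def]
    simp only [dOmega, omega2, lie_self, map_zero, LinearMap.zero_apply, hswap, map_neg,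
      LinearMap.neg_apply]
    ring
  have hB0 : dOmega ip₂ J e (J e) e₁ = 0 := by
    rw [hJe]
    simp only [dOmega, omega2, lie_neg, neg_lie, lie_self, map_neg, LinearMap.neg_apply,
      neg_neg, hswap, map_zero, LinearMap.zero_apply, LinearMap.map_neg]
    ring
  have hθy : ∀ y ∈ b₁, ip₂ (J ⁅e₁, e⁆) y = 0 := by
    intro y hy
    have hyb : y ∈ b := hb₁b _ hy
    have h1 : ⁅e, y⁆ = 0 := habel _ he_mem _ hyb
    have h2 : ip₂ (J ⁅e₁, y⁆) e = 0 := hb₁e _ (hJb₁ _ ((hfb₁ y hy).1))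
    have hAy : dOmega ip₂ J e₁ (J e₁) y = -ip₂ (J ⁅e₁, e⁆) y := by
      rw [← he_def]
      simp only [dOmega, omega2, h1, map_zero, LinearMap.zero_apply, h2]
      ring
    have hBy : dOmega ip₂ J e (J e) y = -ip₂ (J ⁅e₁, e⁆) y := by
      rw [hJe]
      simp only [dOmega, omega2, lie_neg, neg_lie, h1, hswap, map_neg, LinearMap.neg_apply,
        neg_neg, map_zero, LinearMap.zero_apply, LinearMap.map_neg, h2]
      ring
    have hrest : ∀ j, dOmega ip₂ J (u j) (J (u j)) y = 0 :=
      fun j => hterm_b₁ _ (humem j) _ hyb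
    have h := hθ y
    rw [hsplit y, hAy, hBy, Finset.sum_congr rfl (fun j _ => hrest j),
      Finset.sum_const_zero] at h
    linarith
  -- conclude ⁅e₁, e⁆ = a • e, then with unimodularity a = 0
  have hfe_b : ⁅e₁, e⁆ ∈ b := hideal e₁ e he_mem
  set a : ℝ := ip₂ ⁅e₁, e⁆ e with ha_def
  have hv_mem : ⁅e₁, e⁆ - a • e ∈ b₁ := by
    rw [hmem_b₁]
    refine ⟨Submodule.sub_mem _ hfe_b (Submodule.smul_mem _ _ he_mem), ?_⟩
    simp [map_sub, map_smul, smul_eq_mul, hee, ha_def]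
  have hJv : J (⁅e₁, e⁆ - a • e) = 0 := by
    apply hdef₂
    have h := hθy _ (hJb₁ _ hv_mem)
    have hexp : J ⁅e₁, e⁆ = J (⁅e₁, e⁆ - a • e) + a • J e := by
      rw [map_sub, map_smul]
      abel
    rw [hexp] at h
    simp only [map_add, map_smul, LinearMap.add_apply, LinearMap.smul_apply, smul_eq_mul] at h
    have hz : ip₂ (J e) (J (⁅e₁, e⁆ - a • e)) = 0 := by
      rw [hJe]
      have : J (⁅e₁, e⁆ - a • e) ∈ b :=  hb₁b _ (hJb₁ _ hv_mem)
      have h0 := (hbcrit _).1 this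
      simp only [map_neg, LinearMap.neg_apply, neg_eq_zero]
      exact h0
    rw [hz] at h
    simpa using h
  have hv0 : ⁅e₁, e⁆ - a • e = 0 := by
    have h := hJ2 (⁅e₁, e⁆ - a • e)
    rw [hJv, map_zero] at h
    exact (neg_eq_zero.1 h.symm)
  have hfe_ae : ⁅e₁, e⁆ = a • e := by
    have := sub_eq_zero.1 hv0
    exact this
  -- trace computation
  have hreprB : ∀ (x : g) i, B.repr x i = ip₂ x (B i) := by
    intro x i
    conv_rhs => rw [← B.sum_repr x]
    simp only [map_sum, map_smul, LinearMap.sum_apply, LinearMap.smul_apply, smul_eq_mul]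
    rw [Finset.sum_congr rfl (fun j _ => by rw [hB j, hB i, horthoc j i])]
    simp [mul_ite, Finset.sum_ite_eq']
  have htr : LinearMap.trace ℝ g (LieAlgebra.ad ℝ g e₁) = ∑ i, ip₂ ⁅e₁, B i⁆ (B i) := by
    rw [LinearMap.trace_eq_matrix_trace ℝ B]
    rw [Matrix.trace]
    congr 1
    ext i
    rw [Matrix.diag_apply, LinearMap.toMatrix_apply, hreprB]
    congr 1
  have ha0 : a = 0 := by
    have h := hu e₁
    rw [htr] at h
    have hsplit2 : (∑ i, ip₂ ⁅e₁, B i⁆ (B i)) =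
        ip₂ ⁅e₁, e₁⁆ e₁ + ip₂ ⁅e₁, e⁆ e + ∑ j, ip₂ ⁅e₁, u j⁆ (u j) := by
      simp only [hB, hcfam]
      rw [Fin.sum_univ_succ]
      simp only [Fin.cons_zero, Fin.cons_succ]
      rw [Fin.sum_univ_succ]
      simp only [Fin.cons_zero, Fin.cons_succ]
      ring
    rw [hsplit2] at h
    -- the balanced condition at e₁ kills the last sum
    have hterm_e₁ : ∀ w ∈ b₁, dOmega ip₂ J w (J w) e₁ = -2 * ip₂ ⁅e₁, w⁆ w := by
      intro w hw
      have h1 : ⁅w, J w⁆ = 0 := habel _ (hb₁b _ hw) _ (hb₁b _ (hJb₁ _ hw))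
      have h2 : ⁅w, e₁⁆ = -⁅e₁, w⁆ := by rw [← lie_skew]
      have h3 : ⁅J w, e₁⁆ = -⁅e₁, J w⁆ := by rw [← lie_skew]
      have h4 : ⁅e₁, J w⁆ = J ⁅e₁, w⁆ := (hfb₁ w hw).2
      simp only [dOmega, omega2, h1, h2, h3, h4, map_zero, LinearMap.zero_apply, map_neg,
        LinearMap.neg_apply, LinearMap.map_neg, hJ2]
      rw [show ip₂ (J ⁅e₁, w⁆) (J w) = ip₂ ⁅e₁, w⁆ w from hcomp₂ _ _]
      ring
    have hθe₁ := hθ e₁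
    rw [hsplit e₁, hA0, hB0, Finset.sum_congr rfl (fun j _ => hterm_e₁ _ (humem j))] at hθe₁
    simp only [zero_add, add_zero] at hθe₁
    -- hθe₁ : ∑ j, -2 * ip₂ ⁅e₁, u j⁆ (u j) = 0
    have hsum0 : (∑ j, ip₂ ⁅e₁, u j⁆ (u j)) = 0 := by
      have : (∑ j, -2 * ip₂ ⁅e₁, u j⁆ (u j)) = -2 * ∑ j, ip₂ ⁅e₁, u j⁆ (u j) := by
        rw [Finset.mul_sum]
      rw [this] at hθe₁
      linarith
    rw [hsum0, lie_self] at h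
    simpa [ha_def] using h
  have hfe0 : ⁅e₁, e⁆ = 0 := by
    rw [hfe_ae, ha0, zero_smul]
  -- ad e₁ maps b into b₁
  have hbdec : ∀ p ∈ b, p - ip₂ p e • e ∈ b₁ := by
    intro p hp
    rw [hmem_b₁]
    exact ⟨Submodule.sub_mem _ hp (Submodule.smul_mem _ _ he_mem),
      by simp [map_sub, map_smul, smul_eq_mul, hee]⟩
  have hfb : ∀ p ∈ b, ⁅e₁, p⁆ ∈ b₁ := by
    intro p hp
    have h2 : p - ip₂ p e • e ∈ b₁ := hbdec p hp
    have h3 : ⁅e₁, p⁆ = ip₂ p e • ⁅e₁, e⁆ + ⁅e₁, p - ip₂ p e • e⁆ := by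
      rw [← lie_smul, ← lie_add]
      congr 1
      abel
    rw [h3, hfe0, smul_zero, zero_add]
    exact (hfb₁ _ h2).1
  -- SKT adapted decomposition
  obtain ⟨e₁', he₁', hbcrit₁⟩ := exists_unit_orth ip₁ hsym₁ hpos₁ b hcodim
  set e' := J e₁' with he'_def
  have he'_mem : e' ∈ b := by
    rw [hbcrit₁]
    have h1 := skewJ₁ e₁' e₁'
    have h2 := hsym₁ (J e₁') e₁'
    rw [← he'_def] at h1 h2
    linarith
  set l : ℝ := ip₂ e₁ e₁' with hl_def
  have hw_b : e₁' - l • e₁ ∈ b := by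
    rw [hbcrit]
    simp [map_sub, map_smul, smul_eq_mul, he₁, hl_def]
  have hl : l ≠ 0 := by
    intro h0
    have he₁'b : e₁' ∈ b := by
      have := hw_b
      rw [h0, zero_smul, sub_zero] at this
      exact this
    have := (hbcrit₁ e₁').1 he₁'b
    rw [this] at he₁'
    exact one_ne_zero he₁'.symm
  have hbr' : ∀ p ∈ b, ⁅e₁', p⁆ = l • ⁅e₁, p⁆ := by
    intro p hp
    have h1 : ⁅e₁', p⁆ = l • ⁅e₁, p⁆ + ⁅e₁' - l • e₁, p⁆ := by
      rw [← smul_lie, ← add_lie]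
      congr 1
      abel
    rw [h1, habel _ hw_b _ hp, add_zero]
  -- pluriclosed ⇒ (C')
  have hdw0 : ∀ p q r : g, p ∈ b → q ∈ b → r ∈ b → dOmega ip₁ J p q r = 0 := by
    intro p q r hp hq hr
    simp [dOmega, omega2, habel _ hp _ hq, habel _ hp _ hr, habel _ hq _ hr]
  have hsig0 : ∀ p q r : g, p ∈ b₁ → q ∈ b₁ → r ∈ b₁ → sigma3 ip₁ J p q r = 0 := by
    intro p q r hp hq hr
    exact hdw0 _ _ _ (hb₁b _ (hJb₁ _ hp)) (hb₁b _ (hJb₁ _ hq)) (hb₁b _ (hJb₁ _ hr))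
  have hsig_smul : ∀ (t : ℝ) (p q r : g),
      sigma3 ip₁ J (t • p) q r = t * sigma3 ip₁ J p q r := by
    intro t p q r
    simp [sigma3, dOmega, omega2, map_smul, smul_lie, lie_smul, smul_eq_mul]
    ring
  have hsigz : ∀ x y : g, sigma3 ip₁ J 0 x y = 0 := by
    intro x y
    have h := hsig_smul 0 0 x y
    rw [zero_smul, zero_mul] at h
    exact h
  have hsiga : ∀ p ∈ b₁, ∀ r ∈ b₁, sigma3 ip₁ J p e' r =
      l * (ip₁ (J ⁅e₁, J r⁆) (J p) - ip₁ (J ⁅e₁, J p⁆) (J r)) := by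
    intro p hp r hr
    have h1 : J e' = -e₁' := hJ2 e₁'
    have hJp : J p ∈ b := hb₁b _ (hJb₁ _ hp)
    have hJr : J r ∈ b := hb₁b _ (hJb₁ _ hr)
    have hb1 : ⁅J p, J e'⁆ = l • ⁅e₁, J p⁆ := by
      rw [h1, lie_neg, ← lie_skew, neg_neg, hbr' _ hJp]
    have hb2 : ⁅J p, J r⁆ = 0 := habel _ hJp _ hJr
    have hb3 : ⁅J e', J r⁆ = -(l • ⁅e₁, J r⁆) := by
      rw [h1, neg_lie, hbr' _ hJr]
    simp only [sigma3, dOmega, omega2, hb1, hb2, hb3, map_smul, map_neg, map_zero,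
      LinearMap.smul_apply, LinearMap.neg_apply, LinearMap.zero_apply, smul_eq_mul]
    ring
  have hC : ∀ z ∈ b₁, ∀ w ∈ b₁,
      ip₁ ⁅e₁, ⁅e₁, z⁆⁆ w + ip₁ ⁅e₁, ⁅e₁, w⁆⁆ z + 2 * ip₁ ⁅e₁, z⁆ ⁅e₁, w⁆ = 0 := by
    intro z hz w hw
    have h := hskt₁ e₁' e' z (J w)
    have hz_b : z ∈ b := hb₁b _ hz
    have hJw : J w ∈ b₁ := hJb₁ _ hw
    have hb1 : ⁅e₁', e'⁆ = l • ⁅e₁, e'⁆ := hbr' _ he'_mem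
    have hb2 : ⁅e₁', z⁆ = l • ⁅e₁, z⁆ := hbr' _ hz_b
    have hb3 : ⁅e₁', J w⁆ = l • ⁅e₁, J w⁆ := hbr' _ (hb₁b _ hJw)
    have hb4 : ⁅e', z⁆ = 0 := habel _ he'_mem _ hz_b
    have hb5 : ⁅e', J w⁆ = 0 := habel _ he'_mem _ (hb₁b _ hJw)
    have hb6 : ⁅z, J w⁆ = 0 := habel _ hz_b _ (hb₁b _ hJw)
    rw [hb1, hb2, hb3, hb4, hb5, hb6, hsig_smul, hsig_smul, hsig_smul,
      hsigz, hsigz, hsigz] at h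
    have hfe' : ⁅e₁, e'⁆ ∈ b₁ := hfb _ he'_mem
    have hfz : ⁅e₁, z⁆ ∈ b₁ := (hfb₁ _ hz).1
    have hfJw : ⁅e₁, J w⁆ ∈ b₁ := (hfb₁ _ hJw).1
    rw [hsig0 _ _ _ hfe' hz hJw, hsiga _ hfz _ hJw, hsiga _ hfJw _ hz] at h
    -- simplify the four inner-product terms
    have hcz : ⁅e₁, J z⁆ = J ⁅e₁, z⁆ := (hfb₁ _ hz).2
    have hcw : ⁅e₁, J w⁆ = J ⁅e₁, w⁆ := (hfb₁ _ hw).2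
    have hcfz : ⁅e₁, J ⁅e₁, z⁆⁆ = J ⁅e₁, ⁅e₁, z⁆⁆ := (hfb₁ _ hfz).2
    have hfw0 : ⁅e₁, w⁆ ∈ b₁ := (hfb₁ _ hw).1
    have hcfw : ⁅e₁, J ⁅e₁, w⁆⁆ = J ⁅e₁, ⁅e₁, w⁆⁆ := (hfb₁ _ hfw0).2
    have hT1 : ip₁ (J ⁅e₁, J (J w)⁆) (J ⁅e₁, z⁆) = -ip₁ ⁅e₁, w⁆ ⁅e₁, z⁆ := by
      simp only [hJ2, lie_neg, map_neg, LinearMap.neg_apply, hcomp₁ ⁅e₁, w⁆ ⁅e₁, z⁆]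
    have hT2 : ip₁ (J ⁅e₁, J ⁅e₁, z⁆⁆) (J (J w)) = ip₁ ⁅e₁, ⁅e₁, z⁆⁆ w := by
      simp only [hcfz, hJ2, map_neg, LinearMap.neg_apply, neg_neg]
    have hT3 : ip₁ (J ⁅e₁, J z⁆) (J ⁅e₁, J w⁆) = ip₁ ⁅e₁, z⁆ ⁅e₁, w⁆ := by
      simp only [hcz, hcw, hJ2, map_neg, LinearMap.neg_apply, neg_neg]
    have hT4 : ip₁ (J ⁅e₁, J ⁅e₁, J w⁆⁆) (J z) = -ip₁ ⁅e₁, ⁅e₁, w⁆⁆ z := by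
      simp only [hcw, hJ2, lie_neg, map_neg, LinearMap.neg_apply,
        hcomp₁ ⁅e₁, ⁅e₁, w⁆⁆ z]
    rw [hT1, hT2, hT3, hT4] at h
    have key : l * l * (-(ip₁ ⁅e₁, w⁆ ⁅e₁, z⁆) - ip₁ ⁅e₁, ⁅e₁, z⁆⁆ w
        - ip₁ ⁅e₁, z⁆ ⁅e₁, w⁆ - ip₁ ⁅e₁, ⁅e₁, w⁆⁆ z) = 0 := by
      linear_combination h
    have h2 : -(ip₁ ⁅e₁, w⁆ ⁅e₁, z⁆) - ip₁ ⁅e₁, ⁅e₁, z⁆⁆ w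
        - ip₁ ⁅e₁, z⁆ ⁅e₁, w⁆ - ip₁ ⁅e₁, ⁅e₁, w⁆⁆ z = 0 := by
      rcases mul_eq_zero.1 key with h' | h'
      · exact absurd h' (mul_ne_zero hl hl)
      · exact h'
    have hs := hsym₁ ⁅e₁, w⁆ ⁅e₁, z⁆
    linarith
  -- orthonormal basis of b₁ for ip₁; sum of squares argument
  obtain ⟨n', u', hn'_rank, humem', huorth', huexp'⟩ := exists_onb ip₁ hsym₁ hpos₁ b₁
  set adE : g →ₗ[ℝ] g := LieAlgebra.ad ℝ g e₁ with hadE_def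
  have hadE : ∀ x : g, adE x = ⁅e₁, x⁆ := fun x => rfl
  set s' : g →ₗ[ℝ] g →ₗ[ℝ] ℝ := ip₁.comp adE + ip₁.compl₂ adE with hs'_def
  have hs'app : ∀ x y : g, s' x y = ip₁ ⁅e₁, x⁆ y + ip₁ x ⁅e₁, y⁆ := by
    intro x y
    simp [hs'_def, LinearMap.add_apply, LinearMap.comp_apply, LinearMap.compl₂_apply, hadE]
  have hdiag : ∀ i, s' (u' i) ⁅e₁, u' i⁆ = 0 := by
    intro i
    have h := hC (u' i) (humem' i) (u' i) (humem' i)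
    rw [hs'app]
    have hsymm := hsym₁ ⁅e₁, ⁅e₁, u' i⁆⁆ (u' i)
    linarith
  have claim1 : ∀ i, (∑ j, ip₁ ⁅e₁, u' i⁆ (u' j) * s' (u' i) (u' j)) = 0 := by
    intro i
    have hfu : ⁅e₁, u' i⁆ ∈ b₁ := (hfb₁ _ (humem' i)).1
    have hexp := huexp' _ hfu
    calc (∑ j, ip₁ ⁅e₁, u' i⁆ (u' j) * s' (u' i) (u' j))
        = s' (u' i) (∑ j, ip₁ ⁅e₁, u' i⁆ (u' j) • u' j) := by
          rw [map_sum]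
          exact Finset.sum_congr rfl fun j _ => by rw [map_smul, smul_eq_mul]
      _ = s' (u' i) ⁅e₁, u' i⁆ := by rw [hexp]
      _ = 0 := hdiag i
  have hsymS : ∀ i j, s' (u' i) (u' j) = s' (u' j) (u' i) := by
    intro i j
    rw [hs'app, hs'app, hsym₁ ⁅e₁, u' i⁆ (u' j), hsym₁ (u' i) ⁅e₁, u' j⁆]
    ring
  have hsq : (∑ i, ∑ j, (s' (u' i) (u' j)) ^ 2) = 0 := by
    have step : ∀ i j, (s' (u' i) (u' j)) ^ 2 =
        ip₁ ⁅e₁, u' i⁆ (u' j) * s' (u' i) (u' j)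
          + ip₁ ⁅e₁, u' j⁆ (u' i) * s' (u' j) (u' i) := by
      intro i j
      have e1 := hs'app (u' i) (u' j)
      have e2 := hs'app (u' j) (u' i)
      have e3 := hsym₁ (u' i) ⁅e₁, u' j⁆
      have e4 := hsym₁ (u' j) ⁅e₁, u' i⁆
      rw [e1, e2, e3, e4]
      ring
    rw [Finset.sum_congr rfl fun i _ => Finset.sum_congr rfl fun j _ => step i j]
    rw [Finset.sum_congr rfl fun i _ => Finset.sum_add_distrib]
    rw [Finset.sum_add_distrib]
    rw [Finset.sum_congr rfl fun i _ => claim1 i, Finset.sum_const_zero, zero_add]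
    rw [Finset.sum_comm]
    rw [Finset.sum_congr rfl fun j _ => claim1 j, Finset.sum_const_zero]
  have hs'0 : ∀ i j, s' (u' i) (u' j) = 0 := by
    intro i j
    have h1 : ∀ i ∈ (Finset.univ : Finset (Fin n')),
        (0:ℝ) ≤ ∑ j, (s' (u' i) (u' j)) ^ 2 :=
      fun i _ => Finset.sum_nonneg fun j _ => sq_nonneg _
    have h2 := (Finset.sum_eq_zero_iff_of_nonneg h1).1 hsq i (Finset.mem_univ i)
    have h3 : ∀ j ∈ (Finset.univ : Finset (Fin n')), (0:ℝ) ≤ (s' (u' i) (u' j)) ^ 2 :=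
      fun j _ => sq_nonneg _
    have h4 := (Finset.sum_eq_zero_iff_of_nonneg h3).1 h2 j (Finset.mem_univ j)
    exact pow_eq_zero_iff (by norm_num) |>.1 h4
  have hskew : ∀ z ∈ b₁, ∀ w ∈ b₁, ip₁ ⁅e₁, z⁆ w = -ip₁ z ⁅e₁, w⁆ := by
    intro z hz w hw
    have h : s' z w = 0 := by
      rw [show z = ∑ i, ip₁ z (u' i) • u' i from (huexp' z hz).symm,
        show w = ∑ j, ip₁ w (u' j) • u' j from (huexp' w hw).symm]
      simp only [map_sum, map_smul, LinearMap.sum_apply, LinearMap.smul_apply, smul_eq_mul,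
        hs'0, mul_zero, Finset.sum_const_zero, zero_mul]
    have h2 := hs'app z w
    linarith
  have hKsym : ∀ z ∈ b₁, ∀ w ∈ b₁, ip₁ (J ⁅e₁, z⁆) w = ip₁ (J ⁅e₁, w⁆) z := by
    intro z hz w hw
    calc ip₁ (J ⁅e₁, z⁆) w = -ip₁ ⁅e₁, z⁆ (J w) := skewJ₁ _ _
      _ = -(-ip₁ z ⁅e₁, J w⁆) := by rw [hskew z hz (J w) (hJb₁ _ hw)]
      _ = ip₁ z (J ⁅e₁, w⁆) := by rw [(hfb₁ _ hw).2]; ring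
      _ = ip₁ (J ⁅e₁, w⁆) z := hsym₁ _ _
  -- construction of the Kähler metric
  set π₀ : g →ₗ[ℝ] ℝ := ip₂.flip e₁ with hπ₀_def
  set πe : g →ₗ[ℝ] ℝ := ip₂.flip e with hπe_def
  have hπ₀app : ∀ x : g, π₀ x = ip₂ x e₁ := fun x => rfl
  have hπeapp : ∀ x : g, πe x = ip₂ x e := fun x => rfl
  set P : g →ₗ[ℝ] g := LinearMap.id - π₀.smulRight e₁ - πe.smulRight e with hP_def
  have hPapp : ∀ x : g, P x = x - ip₂ x e₁ • e₁ - ip₂ x e • e := by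
    intro x
    simp [hP_def, LinearMap.sub_apply, LinearMap.smulRight_apply, hπ₀app, hπeapp]
  have hPmem : ∀ x : g, P x ∈ b₁ := by
    intro x
    rw [hmem_b₁, hPapp]
    constructor
    · rw [hbcrit]
      simp only [map_sub, map_smul, LinearMap.sub_apply, LinearMap.smul_apply, smul_eq_mul,
        he₁, he₁e, hsym₂ e₁ x]
      ring
    · simp only [map_sub, map_smul, LinearMap.sub_apply, LinearMap.smul_apply, smul_eq_mul,
        hee, he₁e]
      ring
  have hPb₁ : ∀ x ∈ b₁, P x = x := by
    intro x hx
    rw [hPapp]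
    have h1 : ip₂ x e₁ = 0 := by rw [hsym₂]; exact (hbcrit x).1 (hb₁b _ hx)
    rw [h1, hb₁e _ hx, zero_smul, zero_smul, sub_zero, sub_zero]
  have hxdec : ∀ x : g, x = ip₂ x e₁ • e₁ + ip₂ x e • e + P x := by
    intro x
    rw [hPapp]
    abel
  have hπ₀J : ∀ x : g, ip₂ (J x) e₁ = -ip₂ x e := by
    intro x
    rw [skewJ₂, ← he_def]
  have hπeJ : ∀ x : g, ip₂ (J x) e = ip₂ x e₁ := by
    intro x
    rw [he_def, hcomp₂]
  have hPJ : ∀ x : g, P (J x) = J (P x) := by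
    intro x
    rw [hPapp, hPapp, hπ₀J, hπeJ]
    simp only [map_sub, map_smul]
    rw [← he_def, hJe]
    module
  set ipK : g →ₗ[ℝ] g →ₗ[ℝ] ℝ := LinearMap.mk₂ ℝ
      (fun x y => ip₁ (P x) (P y) + π₀ x * π₀ y + πe x * πe y)
      (fun x x' y => by
        simp only [map_add, LinearMap.add_apply, add_mul]
        ring)
      (fun c x y => by
        simp only [map_smul, LinearMap.smul_apply, smul_eq_mul]
        ring)
      (fun x y y' => by
        simp only [map_add, LinearMap.add_apply, mul_add]
        ring)
      (fun c x y => by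
        simp only [map_smul, LinearMap.smul_apply, smul_eq_mul]
        ring) with hipK_def
  have hipKapp : ∀ x y : g, ipK x y =
      ip₁ (P x) (P y) + ip₂ x e₁ * ip₂ y e₁ + ip₂ x e * ip₂ y e := by
    intro x y
    rw [hipK_def]
    rfl
  have hip₁nonneg : ∀ x : g, 0 ≤ ip₁ x x := by
    intro x
    rcases eq_or_ne x 0 with h | h
    · simp [h]
    · exact (hpos₁ x h).le
  refine ⟨ipK, ⟨?_, ?_⟩, ?_, ?_⟩
  · -- symmetric
    intro x y
    rw [hipKapp, hipKapp, hsym₁ (P x) (P y)]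
    ring
  · -- positive definite
    intro x hx
    rw [hipKapp]
    rcases eq_or_ne (P x) 0 with hP0 | hP0
    · have hx' : ip₂ x e₁ ≠ 0 ∨ ip₂ x e ≠ 0 := by
        by_contra hcon
        push_neg at hcon
        apply hx
        have h := hxdec x
        rw [hcon.1, hcon.2, hP0] at h
        simpa using h
      rw [hP0]
      simp only [map_zero, LinearMap.zero_apply]
      rcases hx' with h | h
      · nlinarith [mul_self_nonneg (ip₂ x e), mul_self_pos.2 h]
      · nlinarith [mul_self_nonneg (ip₂ x e₁), mul_self_pos.2 h]
    · nlinarith [hpos₁ _ hP0, mul_self_nonneg (ip₂ x e₁), mul_self_nonneg (ip₂ x e)]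
  · -- compatible
    intro x y
    rw [hipKapp, hipKapp, hPJ, hPJ, hcomp₁ (P x) (P y), hπ₀J, hπ₀J, hπeJ, hπeJ]
    ring
  · -- Kähler
    have hbrkt : ∀ p q : g, ⁅p, q⁆ = ip₂ p e₁ • ⁅e₁, P q⁆ - ip₂ q e₁ • ⁅e₁, P p⁆ := by
      intro p q
      have hbe : ∀ r : g, ⁅e, P r⁆ = 0 := fun r => habel _ he_mem _ (hb₁b _ (hPmem r))
      have hbb : ⁅P p, P q⁆ = 0 := habel _ (hb₁b _ (hPmem p)) _ (hb₁b _ (hPmem q))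
      have hpe : ⁅P p, e⁆ = 0 := habel _ (hb₁b _ (hPmem p)) _ he_mem
      have hpe₁ : ⁅P p, e₁⁆ = -⁅e₁, P p⁆ := by rw [← lie_skew]
      have hee' : ⁅e, e⁆ = 0 := lie_self e
      conv_lhs => rw [hxdec p, hxdec q]
      simp only [add_lie, lie_add, smul_lie, lie_smul, lie_self, hfe0, hswap, hbe, hbb, hpe,
        hpe₁, hee', smul_zero, neg_zero, zero_add, add_zero, smul_neg]
      module
    have hipK_b₁ : ∀ q ∈ b₁, ∀ t : g, ipK q t = ip₁ q (P t) := by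
      intro q hq t
      rw [hipKapp]
      have h1 : ip₂ q e₁ = 0 := by rw [hsym₂]; exact (hbcrit q).1 (hb₁b _ hq)
      rw [hPb₁ q hq, h1, hb₁e _ hq]
      ring
    have hHsym : ∀ p q : g, ip₁ (J ⁅e₁, P p⁆) (P q) = ip₁ (J ⁅e₁, P q⁆) (P p) :=
      fun p q => hKsym _ (hPmem p) _ (hPmem q)
    have hterm : ∀ p q t : g, ipK (J ⁅p, q⁆) t =
        ip₂ p e₁ * ip₁ (J ⁅e₁, P q⁆) (P t) - ip₂ q e₁ * ip₁ (J ⁅e₁, P p⁆) (P t) := by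
      intro p q t
      rw [hbrkt p q]
      simp only [map_sub, map_smul, LinearMap.sub_apply, LinearMap.smul_apply, smul_eq_mul]
      rw [hipK_b₁ _ (hJb₁ _ (hfb₁ _ (hPmem q)).1) t, hipK_b₁ _ (hJb₁ _ (hfb₁ _ (hPmem p)).1) t]
    intro x y z
    simp only [dOmega, omega2]
    rw [hterm x y z, hterm x z y, hterm y z x]
    linear_combination (ip₂ x e₁) * hHsym z y + (ip₂ y e₁) * hHsym x z
      + (ip₂ z e₁) * hHsym y x

end LieHerm
end
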